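/- For every real a with 1 < a < √2, setting b = 2(a² − 1)/(a(a² − 2)) (note a(a² − 2) ≠ 0 in this range), one has T_{ab}^8(0, −1) = (0, 1). -/

import Mathlib

open Filter Set MeasureTheory

/-- The piecewise slope function: `Fab a b x = a` if `x ≥ 0`, `b` if `x < 0`. -/
noncomputable def Fab (a b x : ℝ) : ℝ := if 0 ≤ x then a else b

/-- The piecewise-linear area-preserving map `T_{ab}(x,y) = (F_{ab}(x)·x − y, x)`,
packaged as a permutation of `ℝ²` (with its explicit inverse). -/
noncomputable def Tab (a b : ℝ) : Equiv.Perm (ℝ × ℝ) where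
  toFun p := (Fab a b p.1 * p.1 - p.2, p.1)
  invFun p := (p.2, Fab a b p.2 * p.2 - p.1)
  left_inv p := by simp
  right_inv p := by simp

/-- A nonzero vector `v` is a periodic ray of `T_{ab}` if `T_{ab}^n v = λ • v`
for some `n ≥ 1` and some `λ > 0`. -/
def IsPeriodicRay (a b : ℝ) (v : ℝ × ℝ) : Prop :=
  v ≠ 0 ∧ ∃ n : ℕ, 1 ≤ n ∧ ∃ l : ℝ, 0 < l ∧ ((Tab a b) ^ n) v = l • v

/-- for `1 < a < √2` and `b = 2(a² − 1)/(a(a² − 2))`, one has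
`T_{ab}⁸(0,−1) = (0,1)`. -/
theorem example51_orbit (a : ℝ) (ha1 : 1 < a) (ha2 : a < Real.sqrt 2)
    (b : ℝ) (hb : b = 2 * (a ^ 2 - 1) / (a * (a ^ 2 - 2))) :
    a * (a ^ 2 - 2) ≠ 0 ∧
    ((Tab a b) ^ (8 : ℕ)) ((0:ℝ), (-1:ℝ)) = ((0:ℝ), (1:ℝ)) := by
  have ha0 : (0:ℝ) < a := lt_trans one_pos ha1
  have ha2' : a ^ 2 < 2 := by
    have h2 : (Real.sqrt 2) ^ 2 = 2 := Real.sq_sqrt (by norm_num)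
    nlinarith [Real.sqrt_nonneg 2]
  have hneg : a ^ 2 - 2 < 0 := by linarith
  have hpos1 : (0:ℝ) < a ^ 2 - 1 := by nlinarith
  have hden : a * (a ^ 2 - 2) ≠ 0 := ne_of_lt (mul_neg_of_pos_of_neg ha0 hneg)
  refine ⟨hden, ?_⟩
  have key : b * (a * (a ^ 2 - 2)) = 2 * (a ^ 2 - 1) := by
    rw [hb]; field_simp; exact div_self (ne_of_lt hneg)
  have s1 : Tab a b ((0:ℝ), (-1:ℝ)) = (1, 0) := by
    simp [Tab, Fab]
  have s2 : Tab a b ((1:ℝ), (0:ℝ)) = (a, 1) := by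
    simp [Tab, Fab]
  have s3 : Tab a b (a, (1:ℝ)) = (a ^ 2 - 1, a) := by
    simp only [Tab, Fab, Equiv.coe_fn_mk, if_pos (le_of_lt ha0)]
    norm_num; ring
  have s4 : Tab a b (a ^ 2 - 1, a) = (a * (a ^ 2 - 2), a ^ 2 - 1) := by
    simp only [Tab, Fab, Equiv.coe_fn_mk, if_pos (le_of_lt hpos1)]
    norm_num; ring
  have s5 : Tab a b (a * (a ^ 2 - 2), a ^ 2 - 1) = (a ^ 2 - 1, a * (a ^ 2 - 2)) := by
    simp only [Tab, Fab, Equiv.coe_fn_mk,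
      if_neg (not_le_of_gt (mul_neg_of_pos_of_neg ha0 hneg))]
    norm_num; linarith [key]
  have s6 : Tab a b (a ^ 2 - 1, a * (a ^ 2 - 2)) = (a, a ^ 2 - 1) := by
    simp only [Tab, Fab, Equiv.coe_fn_mk, if_pos (le_of_lt hpos1)]
    norm_num; ring
  have s7 : Tab a b (a, a ^ 2 - 1) = (1, a) := by
    simp only [Tab, Fab, Equiv.coe_fn_mk, if_pos (le_of_lt ha0)]
    norm_num; ring
  have s8 : Tab a b ((1:ℝ), a) = (0, 1) := by
    simp only [Tab, Fab, Equiv.coe_fn_mk]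
    norm_num
  simp only [show (8:ℕ) = 7+1 from rfl, show (7:ℕ) = 6+1 from rfl,
    show (6:ℕ) = 5+1 from rfl, show (5:ℕ) = 4+1 from rfl, show (4:ℕ) = 3+1 from rfl,
    show (3:ℕ) = 2+1 from rfl, show (2:ℕ) = 1+1 from rfl, pow_succ, pow_one,
    Equiv.Perm.mul_apply]
  rw [s1, s2, s3, s4, s5, s6, s7, s8]
  simp
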